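/- Let ν, n₀ ∈ ℕ, δ ≥ 0, s > 0, and define c(0,k) = 1 and c(N+1,k) = c(N,k) · S(N)/(S(N) + s·k) where S(N) = ν + N + δ·n(N) and n(N) ≤ n₀ + N for all N. Then for every k > 0 there is a constant C such that c(N,k) ≤ C · N^{-sk/(1+δ)} for all N ≥ 1. -/

import Mathlib

open Real

theorem pref_attach_normalizer_decay
    (ν n₀ : ℕ) (δ s : ℝ) (hδ : 0 ≤ δ) (hs : 0 < s)
    (n : ℕ → ℕ) (hn0 : n 0 = n₀) (hn : ∀ N, n N ≤ n₀ + N)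
    (S : ℕ → ℝ) (hS : ∀ N, S N = (ν : ℝ) + N + δ * n N)
    (c : ℕ → ℝ → ℝ)
    (hc0 : ∀ k, c 0 k = 1)
    (hcrec : ∀ N k, c (N + 1) k = c N k * (S N / (S N + s * k))) :
    ∀ k : ℝ, 0 < k → ∃ C : ℝ, ∀ N : ℕ, 1 ≤ N →
      c N k ≤ C * (N : ℝ) ^ (-(s * k) / (1 + δ)) := by
  intro k hk
  have h1δ : (0:ℝ) < 1 + δ := by linarith
  have hsk : (0:ℝ) < s * k := mul_pos hs hk
  set a : ℝ := (ν : ℝ) + δ * n₀ with ha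
  have ha0 : 0 ≤ a := by positivity
  set t : ℝ := s * k / (1 + δ) with ht
  have ht0 : 0 < t := div_pos hsk h1δ
  set c0 : ℝ := (a + s * k) / (1 + δ) with hc0def
  have hc00 : 0 < c0 := div_pos (by linarith) h1δ
  -- basic facts about S
  have hSnn : ∀ j : ℕ, 0 ≤ S j := by
    intro j; rw [hS]; positivity
  have hSub : ∀ j : ℕ, S j ≤ (1 + δ) * j + a := by
    intro j
    rw [hS, ha]
    have : (n j : ℝ) ≤ (n₀ : ℝ) + j := by
      have := hn j; exact_mod_cast this
    nlinarith [hδ]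
  -- per-factor bound
  have hfac : ∀ j : ℕ, S j / (S j + s * k) ≤ Real.exp (-(t / (j + c0))) := by
    intro j
    have hden : 0 < S j + s * k := by have := hSnn j; linarith
    have h1 : S j / (S j + s * k) = 1 - s * k / (S j + s * k) := by
      field_simp; ring
    have hjc : (1 + δ) * ((j : ℝ) + c0) = (1 + δ) * j + a + s * k := by
      rw [hc0def]; field_simp; ring
    have hjc0 : (0:ℝ) < (j : ℝ) + c0 := by positivity
    have h2 : t / ((j : ℝ) + c0) ≤ s * k / (S j + s * k) := by
      have key : t / ((j : ℝ) + c0) = s * k / ((1 + δ) * j + a + s * k) := by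
        rw [← hjc, ht, div_div]
      rw [key]
      apply div_le_div_of_nonneg_left (le_of_lt hsk) hden
      have := hSub j; linarith
    have h3 : S j / (S j + s * k) ≤ 1 - t / ((j : ℝ) + c0) := by
      rw [h1]; linarith
    refine h3.trans ?_
    have := Real.add_one_le_exp (-(t / ((j : ℝ) + c0)))
    linarith
  -- product representation
  have hprod : ∀ N : ℕ, c N k = ∏ j ∈ Finset.range N, (S j / (S j + s * k)) := by
    intro N
    induction N with
    | zero => simp [hc0]
    | succ m ih => rw [hcrec, ih, Finset.prod_range_succ]
  -- sum lower bound
  have hsum : ∀ N : ℕ, Real.log ((N : ℝ) + c0) - Real.log c0 ≤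
      ∑ j ∈ Finset.range N, 1 / ((j : ℝ) + c0) := by
    intro N
    induction N with
    | zero => simp
    | succ m ih =>
      rw [Finset.sum_range_succ]
      have hm0 : (0:ℝ) < (m : ℝ) + c0 := by positivity
      have hstep : Real.log (((m : ℝ) + 1) + c0) - Real.log ((m : ℝ) + c0) ≤
          1 / ((m : ℝ) + c0) := by
        rw [← Real.log_div (by positivity) (by positivity)]
        have hpos : (0:ℝ) < (((m : ℝ) + 1) + c0) / ((m : ℝ) + c0) := by positivity
        have := Real.log_le_sub_one_of_pos hpos
        have heq : (((m : ℝ) + 1) + c0) / ((m : ℝ) + c0) - 1 = 1 / ((m : ℝ) + c0) := by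
          field_simp; ring
        linarith
      push_cast
      linarith
  refine ⟨c0 ^ t, ?_⟩
  intro N hN
  have hN0 : (0:ℝ) < (N : ℝ) := by exact_mod_cast hN
  -- chain of bounds
  have hb1 : c N k ≤ Real.exp (-(t * (∑ j ∈ Finset.range N, 1 / ((j : ℝ) + c0)))) := by
    rw [hprod]
    have : ∀ j ∈ Finset.range N, S j / (S j + s * k) ≤ Real.exp (-(t / (j + c0))) := by
      intro j _; exact hfac j
    calc ∏ j ∈ Finset.range N, (S j / (S j + s * k))
        ≤ ∏ j ∈ Finset.range N, Real.exp (-(t / (j + c0))) := by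
          apply Finset.prod_le_prod
          · intro j _
            have := hSnn j
            have hden : 0 < S j + s * k := by linarith
            positivity
          · exact this
      _ = Real.exp (∑ j ∈ Finset.range N, -(t / ((j : ℝ) + c0))) := by
          rw [Real.exp_sum]
      _ = Real.exp (-(t * (∑ j ∈ Finset.range N, 1 / ((j : ℝ) + c0)))) := by
          congr 1
          rw [Finset.mul_sum, ← Finset.sum_neg_distrib]
          exact Finset.sum_congr rfl (fun j _ => by rw [mul_one_div])
  have hb2 : Real.exp (-(t * (∑ j ∈ Finset.range N, 1 / ((j : ℝ) + c0)))) ≤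
      Real.exp (-(t * (Real.log ((N : ℝ) + c0) - Real.log c0))) := by
    apply Real.exp_le_exp.mpr
    have := hsum N
    nlinarith [ht0]
  have hb3 : Real.exp (-(t * (Real.log ((N : ℝ) + c0) - Real.log c0))) =
      c0 ^ t * ((N : ℝ) + c0) ^ (-t) := by
    rw [Real.rpow_def_of_pos hc00, Real.rpow_def_of_pos (by positivity), ← Real.exp_add]
    ring_nf
  have hb4 : ((N : ℝ) + c0) ^ (-t) ≤ (N : ℝ) ^ (-t) := by
    apply Real.rpow_le_rpow_of_nonpos hN0 (by linarith) (by linarith)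
  have hexp : -(s * k) / (1 + δ) = -t := by rw [ht]; ring
  rw [hexp]
  calc c N k ≤ c0 ^ t * ((N : ℝ) + c0) ^ (-t) := by
        rw [← hb3]; exact hb1.trans hb2
    _ ≤ c0 ^ t * (N : ℝ) ^ (-t) := by
        apply mul_le_mul_of_nonneg_left hb4 (Real.rpow_nonneg hc00.le t)
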